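/- Every cycle whose length is divisible by 4 admits a locally irregular edge coloring with 2 colors. -/

import Mathlib

/-- The number of edges of color `c` incident to vertex `v` under edge coloring `φ`
(the `c`-degree of `v`). -/
noncomputable def colorDeg {V α : Type*} (G : SimpleGraph V)
    (φ : Sym2 V → α) (c : α) (v : V) : ℕ :=
  Nat.card {w : V // G.Adj v w ∧ φ s(v, w) = c}

/-- An edge coloring of `G` is locally irregular if within every color class the
endpoints of each edge have distinct degrees (isolated vertices are irrelevant). -/
def IsLocIrrColoring {V α : Type*} (G : SimpleGraph V) (φ : Sym2 V → α) : Prop :=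
  ∀ ⦃v w : V⦄, G.Adj v w →
    colorDeg G φ (φ s(v, w)) v ≠ colorDeg G φ (φ s(v, w)) w

/-- Every cycle whose length is divisible by 4 admits a locally irregular edge
coloring with 2 colors. -/
theorem cycle_div_four_two_colorable (n : ℕ) (h4 : 4 ∣ n) (hpos : 0 < n) :
    ∃ φ : Sym2 (Fin n) → Fin 2,
      IsLocIrrColoring (SimpleGraph.cycleGraph n) φ := by
  obtain ⟨k, hnk⟩ := h4
  have hk : 1 ≤ k := by omega
  have hn4 : 4 ≤ n := by omega
  haveI : NeZero n := ⟨by omega⟩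
  set one : Fin n := ⟨1, by omega⟩ with hone
  -- the color of the edge from `a` to `a+1`
  set g : Fin n → Fin 2 := fun v => ⟨v.val % 4 / 2, by omega⟩ with hg
  set f : Fin n → Fin n → Fin 2 :=
    fun a b => if b = a + one then g a else if a = b + one then g b else 0 with hf
  -- basic Fin n arithmetic facts
  have haddval : ∀ a : Fin n, (a + one).val = (a.val + 1) % n := by
    intro a; simp [Fin.add_def, hone]
  have hsubval : ∀ a : Fin n, (a - one).val = (a.val + (n - 1)) % n := by
    intro a; simp [Fin.sub_def, hone]; congr 1; omega
  have h20 : one + one ≠ (0 : Fin n) := by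
    intro h
    have hv := congrArg Fin.val h
    rw [haddval] at hv
    rw [Nat.mod_eq_of_lt (by simp [hone]; omega)] at hv
    simp [hone] at hv
  have htwo : ∀ a : Fin n, a + one + one ≠ a := by
    intro a h
    apply h20
    rw [add_assoc] at h
    exact add_left_cancel (h.trans (add_zero a).symm)
  have hsymm : ∀ a b : Fin n, f a b = f b a := by
    intro a b
    simp only [hf]
    by_cases h1 : b = a + one <;> by_cases h2 : a = b + one
    · exact absurd (by rw [← h1, ← h2] : a + one + one = a) (htwo a)
    · rw [if_pos h1, if_neg h2, if_pos h1]
    · rw [if_neg h1, if_pos h2, if_pos h2]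
    · rw [if_neg h1, if_neg h2, if_neg h2, if_neg h1]
  set φ : Sym2 (Fin n) → Fin 2 := Sym2.lift ⟨f, hsymm⟩ with hφ
  have hsub_add : ∀ a : Fin n, a - one + one = a := by intro a; abel
  have hadd_sub : ∀ a : Fin n, a + one - one = a := by intro a; abel
  have hminus_ne : ∀ a : Fin n, a - one ≠ a + one := by
    intro a h
    apply htwo (a - one)
    rw [hsub_add, ← h]
  have hplus : ∀ a : Fin n, φ s(a, a + one) = g a := by
    intro a; simp [hφ, hf]
  have hminus : ∀ a : Fin n, φ s(a, a - one) = g (a - one) := by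
    intro a
    simp [hφ, hf, hminus_ne a, hsub_add a]
  -- adjacency characterization
  have hadj_iff : ∀ v w : Fin n, (SimpleGraph.cycleGraph n).Adj v w ↔
      (w = v + one ∨ w = v - one) := by
    intro v w
    rw [SimpleGraph.cycleGraph_adj']
    have e1 : (v - w).val = 1 ↔ v - w = one := by
      rw [Fin.ext_iff]
    have e2 : (w - v).val = 1 ↔ w - v = one := by
      rw [Fin.ext_iff]
    rw [e1, e2]
    constructor
    · rintro (h | h)
      · right; rw [← h]; abel
      · left; rw [← h]; abel
    · rintro (h | h)
      · right; rw [h]; abel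
      · left; rw [h]; abel
  -- colorDeg computation
  have hcd : ∀ (v : Fin n) (c : Fin 2),
      colorDeg (SimpleGraph.cycleGraph n) φ c v =
        (if g v = c then 1 else 0) + (if g (v - one) = c then 1 else 0) := by
    intro v c
    have hset : ∀ w : Fin n,
        ((SimpleGraph.cycleGraph n).Adj v w ∧ φ s(v, w) = c) ↔
        ((w = v + one ∧ g v = c) ∨ (w = v - one ∧ g (v - one) = c)) := by
      intro w
      rw [hadj_iff]
      constructor
      · rintro ⟨h | h, hc⟩
        · left; subst h; rw [hplus] at hc; exact ⟨rfl, hc⟩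
        · right; subst h; rw [hminus] at hc; exact ⟨rfl, hc⟩
      · rintro (⟨rfl, hc⟩ | ⟨rfl, hc⟩)
        · exact ⟨Or.inl rfl, by rw [hplus]; exact hc⟩
        · exact ⟨Or.inr rfl, by rw [hminus]; exact hc⟩
    unfold colorDeg
    rw [Nat.card_congr (Equiv.subtypeEquivRight hset)]
    have : Nat.card {w : Fin n // (w = v + one ∧ g v = c) ∨ (w = v - one ∧ g (v - one) = c)}
        = Set.ncard {w : Fin n | (w = v + one ∧ g v = c) ∨ (w = v - one ∧ g (v - one) = c)} :=
      (Nat.card_coe_set_eq _).symm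
    rw [this]
    by_cases h1 : g v = c <;> by_cases h2 : g (v - one) = c
    · rw [show {w : Fin n | (w = v + one ∧ g v = c) ∨ (w = v - one ∧ g (v - one) = c)}
          = {v + one, v - one} by ext w; simp [h1, h2]]
      rw [Set.ncard_pair (fun h => hminus_ne v h.symm), if_pos h1, if_pos h2]
    · rw [show {w : Fin n | (w = v + one ∧ g v = c) ∨ (w = v - one ∧ g (v - one) = c)}
          = {v + one} by ext w; simp [h1, h2]]
      rw [Set.ncard_singleton, if_pos h1, if_neg h2]
    · rw [show {w : Fin n | (w = v + one ∧ g v = c) ∨ (w = v - one ∧ g (v - one) = c)}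
          = {v - one} by ext w; simp [h1, h2]]
      rw [Set.ncard_singleton, if_neg h1, if_pos h2]
    · rw [show {w : Fin n | (w = v + one ∧ g v = c) ∨ (w = v - one ∧ g (v - one) = c)}
          = (∅ : Set (Fin n)) by ext w; simp [h1, h2]]
      rw [Set.ncard_empty, if_neg h1, if_neg h2]
  -- the key parity fact
  have hkey : ∀ v : Fin n, (g (v - one) = g v ↔ ¬ g (v + one) = g v) := by
    intro v
    have hlt := v.isLt
    have e1 : (g (v + one)).val = (v.val + 1) % 4 / 2 := by
      show (v + one).val % 4 / 2 = _
      rw [haddval, Nat.mod_mod_of_dvd _ ⟨k, hnk⟩]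
    have e2 : (g (v - one)).val = (v.val + (n - 1)) % 4 / 2 := by
      show (v - one).val % 4 / 2 = _
      rw [hsubval, Nat.mod_mod_of_dvd _ ⟨k, hnk⟩]
    have e3 : (g v).val = v.val % 4 / 2 := rfl
    rw [Fin.ext_iff, Fin.ext_iff, e1, e2, e3]
    omega
  -- the main step
  have hstep : ∀ u : Fin n,
      colorDeg (SimpleGraph.cycleGraph n) φ (φ s(u, u + one)) u ≠
      colorDeg (SimpleGraph.cycleGraph n) φ (φ s(u, u + one)) (u + one) := by
    intro u
    rw [hplus, hcd, hcd, hadd_sub]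
    by_cases hB : g (u + one) = g u
    · have hA : ¬ g (u - one) = g u := fun hA' => (hkey u).mp hA' hB
      simp only [if_neg hA, if_pos hB, ite_self, if_pos rfl]
      omega
    · have hA : g (u - one) = g u := (hkey u).mpr hB
      simp only [if_pos hA, if_neg hB, ite_self, if_pos rfl]
      omega
  refine ⟨φ, ?_⟩
  intro v w hadj
  rw [hadj_iff] at hadj
  rcases hadj with rfl | rfl
  · exact hstep v
  · have h1 : s(v, v - one) = s(v - one, v) := Sym2.eq_swap
    rw [h1]
    have := (hstep (v - one)).symm
    rwa [hsub_add] at this
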